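/- Let E be a real inner product space and σ : [−1,1] → E a C² curve. Set M := sup_{t ∈ [−1,1]} ‖σ′(t)‖, assume M > 0 and ‖σ″(t)‖ ≤ M/6 for every t ∈ [−1,1]. Then for all s, t ∈ [−1,1], sin ∠(σ′(s), σ′(t)) ≤ |t − s|/4. -/

import Mathlib

open InnerProductGeometry in
private lemma sin_angle_le {E : Type*} [NormedAddCommGroup E] [InnerProductSpace ℝ E]
    (u v : E) (hu : 0 < ‖u‖) (hv : 0 < ‖v‖) :
    Real.sin (angle u v) ≤ ‖u - v‖ / ‖v‖ := by
  have key := sin_angle_mul_norm_mul_norm u v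
  have h1 : (inner ℝ u u : ℝ) * inner ℝ v v - inner ℝ u v * inner ℝ u v ≤ ‖u‖ ^ 2 * ‖u - v‖ ^ 2 := by
    have e1 : (inner ℝ u u : ℝ) = ‖u‖ ^ 2 := real_inner_self_eq_norm_sq u
    have e2 : (inner ℝ v v : ℝ) = ‖v‖ ^ 2 := real_inner_self_eq_norm_sq v
    have e3 : ‖u - v‖ ^ 2 = ‖u‖ ^ 2 - 2 * inner ℝ u v + ‖v‖ ^ 2 := by
      rw [@norm_sub_sq_real]
    nlinarith [sq_nonneg (‖u‖ ^ 2 - (inner ℝ u v : ℝ))]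
  have h2 : Real.sin (angle u v) * (‖u‖ * ‖v‖) ≤ ‖u‖ * ‖u - v‖ := by
    rw [key]
    calc Real.sqrt ((inner ℝ u u : ℝ) * inner ℝ v v - inner ℝ u v * inner ℝ u v)
        ≤ Real.sqrt (‖u‖ ^ 2 * ‖u - v‖ ^ 2) := Real.sqrt_le_sqrt h1
      _ = ‖u‖ * ‖u - v‖ := by
          rw [← mul_pow, Real.sqrt_sq (by positivity)]
  rw [le_div_iff₀ hv]
  nlinarith [h2, hu, hv]

/-- For a C² curve `σ : [−1,1] → E` into a real inner product space with
`M = sup ‖σ′‖ > 0` and `‖σ″(t)‖ ≤ M/6` on `[−1,1]`, the tangent vectors satisfy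
`sin ∠(σ′(s), σ′(t)) ≤ |t − s|/4` for all `s, t ∈ [−1,1]`. -/
theorem stmt_4 {E : Type*} [NormedAddCommGroup E] [InnerProductSpace ℝ E]
    (σ σ' σ'' : ℝ → E) (M : ℝ)
    (hM : M = ⨆ t : Set.Icc (-1:ℝ) 1, ‖σ' t.1‖) (hMpos : 0 < M)
    (hd1 : ∀ t ∈ Set.Icc (-1:ℝ) 1, HasDerivWithinAt σ (σ' t) (Set.Icc (-1:ℝ) 1) t)
    (hd2 : ∀ t ∈ Set.Icc (-1:ℝ) 1, HasDerivWithinAt σ' (σ'' t) (Set.Icc (-1:ℝ) 1) t)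
    (hbd : ∀ t ∈ Set.Icc (-1:ℝ) 1, ‖σ'' t‖ ≤ M / 6) :
    ∀ s ∈ Set.Icc (-1:ℝ) 1, ∀ t ∈ Set.Icc (-1:ℝ) 1,
      Real.sin (InnerProductGeometry.angle (σ' s) (σ' t)) ≤ |t - s| / 4 := by
  intro s hs t ht
  have hconv : Convex ℝ (Set.Icc (-1:ℝ) 1) := convex_Icc _ _
  -- Lipschitz bound on σ'
  have hlip : ∀ a ∈ Set.Icc (-1:ℝ) 1, ∀ b ∈ Set.Icc (-1:ℝ) 1,
      ‖σ' b - σ' a‖ ≤ M / 6 * |b - a| := by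
    intro a ha b hb
    simpa [Real.norm_eq_abs] using
      hconv.norm_image_sub_le_of_norm_hasDerivWithin_le hd2 hbd ha hb
  -- lower bound on norms
  have hlow : ∀ a ∈ Set.Icc (-1:ℝ) 1, 2 * M / 3 ≤ ‖σ' a‖ := by
    intro a ha
    haveI : Nonempty (Set.Icc (-1:ℝ) 1) := ⟨⟨0, by norm_num⟩⟩
    have hsup : M ≤ ‖σ' a‖ + M / 3 := by
      conv_lhs => rw [hM]
      apply ciSup_le
      intro ⟨b, hb⟩
      have h1 := hlip a ha b hb
      have habs : |b - a| ≤ 2 := by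
        rw [abs_le]
        constructor <;> [linarith [hb.1, ha.2]; linarith [hb.2, ha.1]]
      calc ‖σ' b‖ ≤ ‖σ' a‖ + ‖σ' b - σ' a‖ := by
            simpa using norm_add_le (σ' a) (σ' b - σ' a)
        _ ≤ ‖σ' a‖ + M / 6 * 2 := by
            have : M / 6 * |b - a| ≤ M / 6 * 2 :=
              mul_le_mul_of_nonneg_left habs (by positivity)
            linarith
        _ = ‖σ' a‖ + M / 3 := by ring
    linarith
  have hu := hlow s hs
  have hv := hlow t ht
  have hunorm : 0 < ‖σ' s‖ := by linarith
  have hvnorm : 0 < ‖σ' t‖ := by linarith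
  calc Real.sin (InnerProductGeometry.angle (σ' s) (σ' t))
      ≤ ‖σ' s - σ' t‖ / ‖σ' t‖ := sin_angle_le _ _ hunorm hvnorm
    _ ≤ (M / 6 * |t - s|) / (2 * M / 3) := by
        apply div_le_div₀ (by positivity) _ (by positivity) hv
        have := hlip t ht s hs
        rwa [abs_sub_comm] at this
    _ = |t - s| / 4 := by field_simp; ring
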